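/- Let f : ℝ → ℝ be continuous with f(0) = 0, f(u) = o(u) as u → 0, and suppose u ↦ f(u)/|u| is non-decreasing on (-∞,0) and on (0,+∞). Then for all u ∈ ℝ, f(u)·u ≥ 2F(u) ≥ 0, where F(u) = ∫₀ᵘ f(t) dt. -/

import Mathlib

open Asymptotics Filter

theorem stmt0 (f : ℝ → ℝ) (hf : Continuous f) (hf0 : f 0 = 0)
    (hlittle : f =o[nhds 0] (id : ℝ → ℝ))
    (hmono_neg : ∀ u v : ℝ, u < 0 → v < 0 → u ≤ v → f u / |u| ≤ f v / |v|)
    (hmono_pos : ∀ u v : ℝ, 0 < u → 0 < v → u ≤ v → f u / |u| ≤ f v / |v|) :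
    ∀ u : ℝ, f u * u ≥ 2 * ∫ t in (0:ℝ)..u, f t ∧ (∫ t in (0:ℝ)..u, f t) ≥ 0 := by
  have hq : Tendsto (fun x => f x / x) (nhds 0) (nhds 0) := by
    rw [isLittleO_iff_tendsto] at hlittle
    · simpa using hlittle
    · intro x hx; simp only [id] at hx; simp [hx, hf0]
  have hqpos : Tendsto (fun x => f x / |x|) (nhdsWithin 0 (Set.Ioi 0)) (nhds 0) := by
    apply (hq.mono_left nhdsWithin_le_nhds).congr'
    filter_upwards [self_mem_nhdsWithin] with x hx
    rw [abs_of_pos hx]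
  have hqneg : Tendsto (fun x => f x / |x|) (nhdsWithin 0 (Set.Iio 0)) (nhds 0) := by
    have : Tendsto (fun x => -(f x / x)) (nhdsWithin 0 (Set.Iio 0)) (nhds 0) := by
      simpa using (hq.mono_left nhdsWithin_le_nhds).neg
    apply this.congr'
    filter_upwards [self_mem_nhdsWithin] with x hx
    rw [abs_of_neg hx, div_neg]
  have hfpos : ∀ t : ℝ, 0 < t → 0 ≤ f t := by
    intro t ht
    have key : (0:ℝ) ≤ f t / |t| := by
      refine le_of_tendsto hqpos ?_
      filter_upwards [Ioo_mem_nhdsGT_of_mem (Set.mem_Ico.mpr ⟨le_refl 0, ht⟩)] with s hs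
      exact hmono_pos s t hs.1 ht hs.2.le
    have h0 : (0:ℝ) < |t| := abs_pos.mpr ht.ne'
    have := mul_nonneg key h0.le
    rwa [div_mul_cancel₀ _ h0.ne'] at this
  have hfneg : ∀ t : ℝ, t < 0 → f t ≤ 0 := by
    intro t ht
    have key : f t / |t| ≤ 0 := by
      refine ge_of_tendsto hqneg ?_
      filter_upwards [Ioo_mem_nhdsLT_of_mem (Set.mem_Ioc.mpr ⟨ht, le_refl 0⟩)] with s hs
      exact hmono_neg t s ht hs.2 hs.1.le
    have h0 : (0:ℝ) < |t| := abs_pos.mpr ht.ne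
    have := mul_nonpos_of_nonpos_of_nonneg key h0.le
    rwa [div_mul_cancel₀ _ h0.ne'] at this
  intro u
  rcases lt_trichotomy u 0 with hu | hu | hu
  · -- u < 0
    have hintf : IntervalIntegrable f MeasureTheory.volume u 0 := hf.intervalIntegrable _ _
    have hintg : IntervalIntegrable (fun t => f u / u * t) MeasureTheory.volume u 0 :=
      (continuous_const.mul continuous_id).intervalIntegrable _ _
    have hptwise : ∀ t ∈ Set.Icc u 0, f u / u * t ≤ f t := by
      intro t ht
      rcases eq_or_lt_of_le ht.2 with rfl | ht0
      · simp [hf0]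
      · have h := hmono_neg u t hu ht0 ht.1
        rw [abs_of_neg hu, abs_of_neg ht0, div_le_div_iff₀ (by linarith) (by linarith)] at h
        have hh : f t * u ≤ f u * t := by nlinarith
        have : f u / u * t = f u * t / u := by ring
        rw [this, div_le_iff_of_neg hu]
        linarith
    have hle : ∫ t in u..(0:ℝ), f u / u * t ≤ ∫ t in u..(0:ℝ), f t :=
      intervalIntegral.integral_mono_on hu.le hintg hintf hptwise
    have hcomp : ∫ t in u..(0:ℝ), f u / u * t = f u / u * (-(u^2) / 2) := by
      rw [intervalIntegral.integral_const_mul, integral_id]; ring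
    have hnonpos : ∫ t in u..(0:ℝ), f t ≤ 0 := by
      have h0 : ∫ t in u..(0:ℝ), f t ≤ ∫ t in u..(0:ℝ), (0:ℝ) := by
        apply intervalIntegral.integral_mono_on hu.le hintf intervalIntegrable_const
        intro t ht
        rcases eq_or_lt_of_le ht.2 with rfl | ht0
        · simp [hf0]
        · exact hfneg t ht0
      simpa using h0
    have hsymm : (∫ t in (0:ℝ)..u, f t) = -∫ t in u..(0:ℝ), f t :=
      intervalIntegral.integral_symm u 0
    constructor
    · rw [hsymm]
      rw [hcomp] at hle
      have : f u / u * (-(u^2) / 2) = -(f u * u) / 2 := by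
        field_simp [hu.ne]
      rw [this] at hle
      linarith
    · rw [hsymm]; linarith
  · simp [hu]
  · -- u > 0
    have hintf : IntervalIntegrable f MeasureTheory.volume 0 u := hf.intervalIntegrable _ _
    have hintg : IntervalIntegrable (fun t => f u / u * t) MeasureTheory.volume 0 u :=
      (continuous_const.mul continuous_id).intervalIntegrable _ _
    have hptwise : ∀ t ∈ Set.Icc (0:ℝ) u, f t ≤ f u / u * t := by
      intro t ht
      rcases eq_or_lt_of_le ht.1 with rfl | ht0
      · simp [hf0]
      · have h := hmono_pos t u ht0 hu ht.2
        rw [abs_of_pos ht0, abs_of_pos hu, div_le_div_iff₀ ht0 hu] at h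
        have : f u / u * t = f u * t / u := by ring
        rw [this, le_div_iff₀ hu]
        linarith
    have hle : ∫ t in (0:ℝ)..u, f t ≤ ∫ t in (0:ℝ)..u, f u / u * t :=
      intervalIntegral.integral_mono_on hu.le hintf hintg hptwise
    have hcomp : ∫ t in (0:ℝ)..u, f u / u * t = f u / u * (u^2 / 2) := by
      rw [intervalIntegral.integral_const_mul, integral_id]; ring
    constructor
    · rw [hcomp] at hle
      have : f u / u * (u^2 / 2) = f u * u / 2 := by field_simp
      rw [this] at hle
      linarith
    · apply intervalIntegral.integral_nonneg hu.le
      intro t ht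
      rcases eq_or_lt_of_le ht.1 with rfl | ht0
      · simp [hf0]
      · exact hfpos t ht0
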